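/- Fix a discretization and indices q̂ ∈ {0,…,N_φ−1} and p̂ ∈ {0,…,N_s−1}. Then Σ_{i,j=0}^{N_x−1} ω^pd(x_{ij}·θ_{q̂} − s_{p̂}) ≤ ⌈δ_s/δ_x⌉ · 4√2 / (δ_x·δ_s), where ⌈t⌉ denotes the smallest natural number n with t ≤ n. -/

import Mathlib

open MeasureTheory Real Set Filter
open scoped BigOperators ENNReal Topology

noncomputable section

/-- The spatial domain: the open Euclidean unit ball in the plane. -/
def Omg : Set (ℝ × ℝ) := {x : ℝ × ℝ | x.1 ^ 2 + x.2 ^ 2 < 1}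

/-- The sinogram domain `[0,π) × (−1,1)`. -/
def Sino : Set (ℝ × ℝ) := Ico (0 : ℝ) π ×ˢ Ioo (-1 : ℝ) 1

/-- `κ(φ) = min(1/|cos φ|, 1/|sin φ|)`. -/
def kap (φ : ℝ) : ℝ := min (1 / |cos φ|) (1 / |sin φ|)

/-- `s̄(φ) = (δ_x/2)(|cos φ| + |sin φ|)`. -/
def sbar (dx φ : ℝ) : ℝ := dx / 2 * (|cos φ| + |sin φ|)

/-- `s̲(φ) = (δ_x/2)·||cos φ| − |sin φ||`. -/
def sund (dx φ : ℝ) : ℝ := dx / 2 * |(|cos φ| - |sin φ|)|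

open Classical in
/-- The ray-driven weight function `ω^rd(φ,t)` (for spatial resolution `dx`). -/
def wrd (dx φ t : ℝ) : ℝ :=
  (1 / dx) *
    (if |t| < sund dx φ then kap φ
    else if |t| < sbar dx φ then (sbar dx φ - |t|) / (dx * |cos φ * sin φ|)
    else if (∃ k : ℤ, φ = k * (π / 2)) ∧ |t| = sbar dx φ then 1 / 2
    else 0)

/-- The pixel-driven weight function `ω^pd(t)` (for detector resolution `ds`). -/
def wpd (ds t : ℝ) : ℝ := (1 / ds ^ 2) * max (ds - |t|) 0

/-- The Radon transform, as a pointwise line-integral formula: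
`[Rf](φ,s) = ∫ f(s·θ_φ + t·θ_φ^⊥) dt`. -/
def Radon (f : ℝ × ℝ → ℝ) (φ s : ℝ) : ℝ :=
  ∫ t : ℝ, f (s * cos φ - t * sin φ, s * sin φ + t * cos φ)

/-- The backprojection `[R*g](x) = ∫_0^π g(φ, x·θ_φ) dφ`. -/
def Backproj (g : ℝ × ℝ → ℝ) (x : ℝ × ℝ) : ℝ :=
  ∫ φ in Ico (0 : ℝ) π, g (φ, x.1 * cos φ + x.2 * sin φ)

/-- A discretization: spatial resolution `N_x`, detector resolution `N_s`, and
`N_φ` strictly increasing angles in `[0,π)`. -/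
structure Disc where
  Nx : ℕ
  Nx_pos : 0 < Nx
  Ns : ℕ
  Ns_pos : 0 < Ns
  Nphi : ℕ
  Nphi_pos : 0 < Nphi
  ang : ℕ → ℝ
  ang_mono : ∀ q q', q < q' → q' < Nphi → ang q < ang q'
  ang_mem : ∀ q, q < Nphi → ang q ∈ Ico (0 : ℝ) π

namespace Disc

variable (D : Disc)

/-- Spatial resolution `δ_x = 2/N_x`. -/
def dx : ℝ := 2 / D.Nx

/-- Detector resolution `δ_s = 2/N_s`. -/
def ds : ℝ := 2 / D.Ns

/-- Pixel centers `x_{ij}`. -/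
def xc (i j : ℕ) : ℝ × ℝ := ((i + 1 / 2) * D.dx - 1, (j + 1 / 2) * D.dx - 1)

/-- Spatial pixels `X_{ij}` (closed squares with center `x_{ij}` and side `δ_x`). -/
def Xpix (i j : ℕ) : Set (ℝ × ℝ) :=
  Icc ((D.xc i j).1 - D.dx / 2) ((D.xc i j).1 + D.dx / 2) ×ˢ
    Icc ((D.xc i j).2 - D.dx / 2) ((D.xc i j).2 + D.dx / 2)

/-- Detector pixel centers `s_p`. -/
def sc (p : ℕ) : ℝ := (p + 1 / 2) * D.ds - 1

/-- Detector pixels `S_p`. -/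
def Spix (p : ℕ) : Set ℝ := Ico (D.sc p - D.ds / 2) (D.sc p + D.ds / 2)

/-- Lower endpoint of the angular pixel `Φ_q`. -/
def philow (q : ℕ) : ℝ := if q = 0 then 0 else (D.ang (q - 1) + D.ang q) / 2

/-- Upper endpoint of the angular pixel `Φ_q`. -/
def phihigh (q : ℕ) : ℝ := if q = D.Nphi - 1 then π else (D.ang q + D.ang (q + 1)) / 2

/-- Angular pixels `Φ_q`. -/
def Phipix (q : ℕ) : Set ℝ := Ico (D.philow q) (D.phihigh q)

/-- Angular resolution `δ_φ = max_q |Φ_q|`. -/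
def dphi : ℝ :=
  (Finset.range D.Nphi).sup' (Finset.nonempty_range_iff.mpr D.Nphi_pos.ne')
    fun q => D.phihigh q - D.philow q

/-- The argument `x_{ij}·θ_q − s_p` at which weights are evaluated. -/
def off (i j q p : ℕ) : ℝ :=
  (D.xc i j).1 * cos (D.ang q) + (D.xc i j).2 * sin (D.ang q) - D.sc p

/-- Generic convolutional discretization of the Radon transform with weight `w`. -/
def discRadon (w : ℝ → ℝ → ℝ) (f : ℝ × ℝ → ℝ) (y : ℝ × ℝ) : ℝ :=
  ∑ q ∈ Finset.range D.Nphi, ∑ p ∈ Finset.range D.Ns,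
    Set.indicator (D.Phipix q ×ˢ D.Spix p) (fun _ => (1 : ℝ)) y *
      ∑ i ∈ Finset.range D.Nx, ∑ j ∈ Finset.range D.Nx,
        w (D.ang q) (D.off i j q p) * ∫ x in D.Xpix i j, f x

/-- Generic convolutional discretization of the backprojection with weight `w`. -/
def discBackproj (w : ℝ → ℝ → ℝ) (g : ℝ × ℝ → ℝ) (x : ℝ × ℝ) : ℝ :=
  ∑ i ∈ Finset.range D.Nx, ∑ j ∈ Finset.range D.Nx,
    Set.indicator (D.Xpix i j) (fun _ => (1 : ℝ)) x *
      ∑ q ∈ Finset.range D.Nphi, ∑ p ∈ Finset.range D.Ns,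
        w (D.ang q) (D.off i j q p) * ∫ y in D.Phipix q ×ˢ D.Spix p, g y

end Disc


/-! ### Auxiliary lemmas for the pixel-driven weight bound -/

private lemma wpd_pair_bound {ds u v : ℝ} (hds : 0 < ds) (huv : ds ≤ |u - v|) :
    max (ds - |u|) 0 + max (ds - |v|) 0 ≤ ds := by
  have habs : |u - v| ≤ |u| + |v| := by
    calc |u - v| = |u + -v| := by ring_nf
    _ ≤ |u| + |-v| := abs_add_le _ _
    _ = |u| + |v| := by rw [abs_neg]
  rcases le_or_gt (ds - |u|) 0 with h | h
  · rw [max_eq_right h]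
    simp only [zero_add]
    exact max_le (by linarith [abs_nonneg v]) hds.le
  · rcases le_or_gt (ds - |v|) 0 with h' | h'
    · rw [max_eq_right h', max_eq_left h.le]; linarith [abs_nonneg u]
    · rw [max_eq_left h.le, max_eq_left h'.le]; linarith

private lemma sumg_le (ds t0 h : ℝ) (hds : 0 < ds) (T : Finset ℕ)
    (hsep : ∀ a ∈ T, ∀ b ∈ T, a < b → ds ≤ ((b : ℝ) - a) * |h|) :
    ∑ j ∈ T, max (ds - |t0 + j * h|) 0 ≤ ds := by
  classical
  set g : ℕ → ℝ := fun j => max (ds - |t0 + (j : ℝ) * h|) 0 with hgdef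
  have hg0 : ∀ j, 0 ≤ g j := fun j => le_max_right _ _
  have hgle : ∀ j, g j ≤ ds :=
    fun j => max_le (by linarith [abs_nonneg (t0 + (j : ℝ) * h)]) hds.le
  have habslt : ∀ j, g j ≠ 0 → |t0 + (j : ℝ) * h| < ds := by
    intro j hj
    by_contra hc
    push_neg at hc
    apply hj
    show max (ds - |t0 + (j : ℝ) * h|) 0 = 0
    exact max_eq_right (by linarith)
  have hdiff : ∀ a b : ℕ, a ≤ b →
      |(t0 + (b : ℝ) * h) - (t0 + (a : ℝ) * h)| = ((b : ℝ) - a) * |h| := by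
    intro a b hab
    have : (t0 + (b : ℝ) * h) - (t0 + (a : ℝ) * h) = ((b : ℝ) - a) * h := by ring
    rw [this, abs_mul, abs_of_nonneg (by exact_mod_cast sub_nonneg.mpr (by exact_mod_cast hab : (a:ℝ) ≤ b))]
  rw [← Finset.sum_filter_ne_zero T (f := g)]
  set T' := T.filter fun j => g j ≠ 0 with hT'
  have hT'sub : T' ⊆ T := Finset.filter_subset _ _
  rcases T'.eq_empty_or_nonempty with he | hne
  · rw [he]; simpa using hds.le
  · set a := T'.min' hne with ha
    set b := T'.max' hne with hb
    have haT' : a ∈ T' := T'.min'_mem hne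
    have hbT' : b ∈ T' := T'.max'_mem hne
    have hgan : g a ≠ 0 := (Finset.mem_filter.mp haT').2
    have hgbn : g b ≠ 0 := (Finset.mem_filter.mp hbT').2
    have hab : a ≤ b := T'.min'_le b (T'.max'_mem hne)
    have hsub : T' ⊆ ({a, b} : Finset ℕ) := by
      intro k hk
      have hak : a ≤ k := T'.min'_le k hk
      have hkb : k ≤ b := T'.le_max' k hk
      simp only [Finset.mem_insert, Finset.mem_singleton]
      by_contra hcon
      push_neg at hcon
      obtain ⟨hka, hkb'⟩ := hcon
      have h1 : a < k := lt_of_le_of_ne hak (Ne.symm hka)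
      have h2 : k < b := lt_of_le_of_ne hkb hkb'
      have s1 : ds ≤ ((k : ℝ) - a) * |h| := hsep a (hT'sub haT') k (hT'sub hk) h1
      have s2 : ds ≤ ((b : ℝ) - k) * |h| := hsep k (hT'sub hk) b (hT'sub hbT') h2
      have hlt1 : |t0 + (a : ℝ) * h| < ds := habslt a hgan
      have hlt2 : |t0 + (b : ℝ) * h| < ds := habslt b hgbn
      have hd : |(t0 + (b : ℝ) * h) - (t0 + (a : ℝ) * h)| = ((b : ℝ) - a) * |h| :=
        hdiff a b hab
      have htri : |(t0 + (b : ℝ) * h) - (t0 + (a : ℝ) * h)|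
          ≤ |t0 + (b : ℝ) * h| + |t0 + (a : ℝ) * h| := by
        calc |(t0 + (b : ℝ) * h) - (t0 + (a : ℝ) * h)|
            = |(t0 + (b : ℝ) * h) + -(t0 + (a : ℝ) * h)| := by ring_nf
          _ ≤ |t0 + (b : ℝ) * h| + |-(t0 + (a : ℝ) * h)| := abs_add_le _ _
          _ = _ := by rw [abs_neg]
      have : ((b : ℝ) - a) * |h| = ((b : ℝ) - k) * |h| + ((k : ℝ) - a) * |h| := by ring
      linarith
    calc ∑ j ∈ T', g j ≤ ∑ j ∈ ({a, b} : Finset ℕ), g j :=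
          Finset.sum_le_sum_of_subset_of_nonneg hsub (fun i _ _ => hg0 i)
      _ ≤ ds := by
          rcases eq_or_lt_of_le hab with heq | hlt
          · rw [heq, Finset.insert_eq_self.mpr (Finset.mem_singleton_self b),
              Finset.sum_singleton]
            exact hgle b
          · rw [Finset.sum_pair (ne_of_lt hlt)]
            have hsep' : ds ≤ ((b : ℝ) - a) * |h| :=
              hsep a (hT'sub haT') b (hT'sub hbT') hlt
            have hd : ds ≤ |(t0 + (a : ℝ) * h) - (t0 + (b : ℝ) * h)| := by
              rw [abs_sub_comm, hdiff a b hab]; exact hsep'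
            exact wpd_pair_bound hds hd

private lemma sum_wpd_row (ds t0 h : ℝ) (hds : 0 < ds) (n m : ℕ) (hm : 0 < m)
    (hsep : ds ≤ (m : ℝ) * |h|) :
    ∑ j ∈ Finset.range n, wpd ds (t0 + j * h) ≤ (m : ℝ) / ds := by
  classical
  have key : ∑ j ∈ Finset.range n, max (ds - |t0 + (j : ℝ) * h|) 0 ≤ (m : ℝ) * ds := by
    rw [← Finset.sum_fiberwise_of_maps_to (t := Finset.range m) (g := fun j => j % m)
      (fun j _ => Finset.mem_range.mpr (Nat.mod_lt j hm))
      (fun j => max (ds - |t0 + (j : ℝ) * h|) 0)]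
    calc ∑ r ∈ Finset.range m, ∑ j ∈ Finset.range n with j % m = r,
          max (ds - |t0 + (j : ℝ) * h|) 0
        ≤ ∑ _r ∈ Finset.range m, ds := by
          apply Finset.sum_le_sum
          intro r _
          apply sumg_le ds t0 h hds
          intro x hx y hy hxy
          have hxr : x % m = r := (Finset.mem_filter.mp hx).2
          have hyr : y % m = r := (Finset.mem_filter.mp hy).2
          have hdvd : m ∣ y - x := (Nat.modEq_iff_dvd' hxy.le).mp (hxr.trans hyr.symm)
          have hle : m ≤ y - x := Nat.le_of_dvd (by omega) hdvd
          have hle' : (m : ℝ) ≤ (y : ℝ) - x := by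
            have := (Nat.cast_le (α := ℝ)).mpr hle
            rwa [Nat.cast_sub hxy.le] at this
          calc ds ≤ (m : ℝ) * |h| := hsep
            _ ≤ ((y : ℝ) - x) * |h| := mul_le_mul_of_nonneg_right hle' (abs_nonneg h)
      _ = (m : ℝ) * ds := by rw [Finset.sum_const, Finset.card_range, nsmul_eq_mul]
  have hexp : ∑ j ∈ Finset.range n, wpd ds (t0 + j * h)
      = (1 / ds ^ 2) * ∑ j ∈ Finset.range n, max (ds - |t0 + (j : ℝ) * h|) 0 := by
    rw [Finset.mul_sum]
    exact Finset.sum_congr rfl fun j _ => rfl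
  rw [hexp]
  have h1 : (0 : ℝ) < ds ^ 2 := by positivity
  calc (1 / ds ^ 2) * ∑ j ∈ Finset.range n, max (ds - |t0 + (j : ℝ) * h|) 0
      ≤ (1 / ds ^ 2) * ((m : ℝ) * ds) := by
        apply mul_le_mul_of_nonneg_left key (by positivity)
    _ = (m : ℝ) / ds := by field_simp

set_option maxHeartbeats 1000000 in
/-- the sum of pixel-driven weights over all spatial pixels is at most
`⌈δ_s/δ_x⌉·4√2/(δ_x δ_s)`. -/
theorem pixelWeight_space_sum (D : Disc) (qh ph : ℕ) (hq : qh < D.Nphi) (hp : ph < D.Ns) :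
    ∑ i ∈ Finset.range D.Nx, ∑ j ∈ Finset.range D.Nx, wpd D.ds (D.off i j qh ph)
      ≤ (⌈D.ds / D.dx⌉₊ : ℝ) * (4 * Real.sqrt 2 / (D.dx * D.ds)) := by
  have hNx : (0 : ℝ) < D.Nx := by exact_mod_cast D.Nx_pos
  have hNs : (0 : ℝ) < D.Ns := by exact_mod_cast D.Ns_pos
  have hdx : 0 < D.dx := by unfold Disc.dx; positivity
  have hds : 0 < D.ds := by unfold Disc.ds; positivity
  set φ := D.ang qh with hφ
  set M : ℕ := ⌈D.ds / D.dx⌉₊ with hM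
  have hM1 : 1 ≤ M := Nat.one_le_iff_ne_zero.mpr
    (Nat.ceil_pos.mpr (div_pos hds hdx)).ne'
  have hM1' : (1 : ℝ) ≤ (M : ℝ) := by exact_mod_cast hM1
  have hMy : D.ds / D.dx ≤ (M : ℝ) := Nat.le_ceil _
  have hMds : D.ds ≤ (M : ℝ) * D.dx := by
    rw [div_le_iff₀ hdx] at hMy; linarith
  have hs2 : Real.sqrt 2 * Real.sqrt 2 = 2 := Real.mul_self_sqrt (by norm_num)
  have hs2pos : (0 : ℝ) < Real.sqrt 2 := Real.sqrt_pos.mpr (by norm_num)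
  have hs2ge1 : (1 : ℝ) ≤ Real.sqrt 2 := by nlinarith
  have hNxdx : (D.Nx : ℝ) = 2 / D.dx := by
    unfold Disc.dx; field_simp
  have hpyth : cos φ ^ 2 + sin φ ^ 2 = 1 := by
    rw [add_comm]; exact sin_sq_add_cos_sq φ
  have hcs : Real.sqrt 2 / 2 ≤ |cos φ| ∨ Real.sqrt 2 / 2 ≤ |sin φ| := by
    by_contra hcon
    push_neg at hcon
    obtain ⟨h1, h2⟩ := hcon
    nlinarith [abs_nonneg (cos φ), abs_nonneg (sin φ),
      abs_mul_abs_self (cos φ), abs_mul_abs_self (sin φ), sq_abs (cos φ), sq_abs (sin φ)]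
  -- The final numeric comparison, common to both cases
  have hfinal : (D.Nx : ℝ) * (2 * M / D.ds) ≤ (M : ℝ) * (4 * Real.sqrt 2 / (D.dx * D.ds)) := by
    rw [hNxdx]
    rw [div_mul_div_comm]
    have hlhs : 2 * (2 * (M : ℝ)) / (D.dx * D.ds) = 4 * (M : ℝ) / (D.dx * D.ds) := by ring_nf
    rw [hlhs]
    have hrhs : (M : ℝ) * (4 * Real.sqrt 2 / (D.dx * D.ds))
        = 4 * Real.sqrt 2 * (M : ℝ) / (D.dx * D.ds) := by ring
    rw [hrhs]
    apply div_le_div_of_nonneg_right _ (by positivity)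
    nlinarith
  rcases hcs with hcase | hcase
  · -- |cos φ| large: sum over i is the inner arithmetic progression
    rw [Finset.sum_comm]
    have hrow : ∀ j ∈ Finset.range D.Nx,
        ∑ i ∈ Finset.range D.Nx, wpd D.ds (D.off i j qh ph) ≤ (2 * M : ℝ) / D.ds := by
      intro j _
      set t0 : ℝ := (1 / 2 * D.dx - 1) * cos φ + (((j : ℝ) + 1 / 2) * D.dx - 1) * sin φ
        - D.sc ph with ht0
      set h : ℝ := D.dx * cos φ with hh
      have heq : ∀ i : ℕ, D.off i j qh ph = t0 + (i : ℝ) * h := by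
        intro i
        simp only [Disc.off, Disc.xc, ht0, hh, ← hφ]
        ring
      have := sum_wpd_row D.ds t0 h hds D.Nx (2 * M) (Nat.mul_pos two_pos (lt_of_lt_of_le Nat.zero_lt_one hM1))
        (by
          rw [abs_mul, abs_of_pos hdx]
          push_cast
          nlinarith)
      calc ∑ i ∈ Finset.range D.Nx, wpd D.ds (D.off i j qh ph)
          = ∑ i ∈ Finset.range D.Nx, wpd D.ds (t0 + (i : ℝ) * h) :=
            Finset.sum_congr rfl fun i _ => by rw [heq i]
        _ ≤ ((2 * M : ℕ) : ℝ) / D.ds := this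
        _ = (2 * M : ℝ) / D.ds := by push_cast; ring
    calc ∑ j ∈ Finset.range D.Nx, ∑ i ∈ Finset.range D.Nx, wpd D.ds (D.off i j qh ph)
        ≤ ∑ _j ∈ Finset.range D.Nx, (2 * M : ℝ) / D.ds := Finset.sum_le_sum hrow
      _ = (D.Nx : ℝ) * (2 * M / D.ds) := by
          rw [Finset.sum_const, Finset.card_range, nsmul_eq_mul]
      _ ≤ _ := hfinal
  · -- |sin φ| large: sum over j is the inner arithmetic progression
    have hrow : ∀ i ∈ Finset.range D.Nx,
        ∑ j ∈ Finset.range D.Nx, wpd D.ds (D.off i j qh ph) ≤ (2 * M : ℝ) / D.ds := by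
      intro i _
      set t0 : ℝ := (((i : ℝ) + 1 / 2) * D.dx - 1) * cos φ + (1 / 2 * D.dx - 1) * sin φ
        - D.sc ph with ht0
      set h : ℝ := D.dx * sin φ with hh
      have heq : ∀ j : ℕ, D.off i j qh ph = t0 + (j : ℝ) * h := by
        intro j
        simp only [Disc.off, Disc.xc, ht0, hh, ← hφ]
        ring
      have := sum_wpd_row D.ds t0 h hds D.Nx (2 * M) (Nat.mul_pos two_pos (lt_of_lt_of_le Nat.zero_lt_one hM1))
        (by
          rw [abs_mul, abs_of_pos hdx]
          push_cast
          nlinarith)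
      calc ∑ j ∈ Finset.range D.Nx, wpd D.ds (D.off i j qh ph)
          = ∑ j ∈ Finset.range D.Nx, wpd D.ds (t0 + (j : ℝ) * h) :=
            Finset.sum_congr rfl fun j _ => by rw [heq j]
        _ ≤ ((2 * M : ℕ) : ℝ) / D.ds := this
        _ = (2 * M : ℝ) / D.ds := by push_cast; ring
    calc ∑ i ∈ Finset.range D.Nx, ∑ j ∈ Finset.range D.Nx, wpd D.ds (D.off i j qh ph)
        ≤ ∑ _i ∈ Finset.range D.Nx, (2 * M : ℝ) / D.ds := Finset.sum_le_sum hrow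
      _ = (D.Nx : ℝ) * (2 * M / D.ds) := by
          rw [Finset.sum_const, Finset.card_range, nsmul_eq_mul]
      _ ≤ _ := hfinal
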